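/- Let (fₙ) be a sequence of functions [0,1) → M with countable range and measurable point-preimages, which is Cauchy in the pseudometric d(f,g) = λ{t : f(t) ≠ g(t)}. Then there is a function f : [0,1) → M with countable range and measurable point-preimages such that d(fₙ, f) → 0. -/
import Mathlib


open MeasureTheory Filter
open scoped ENNReal

/-- The set where two functions with measurable fibers disagree is measurable. -/
lemma ML_ne_measurable {M : Type*} [Countable M] (p q : ℝ → M)
    (hp : ∀ a : M, MeasurableSet (p ⁻¹' {a})) (hq : ∀ a : M, MeasurableSet (q ⁻¹' {a})) :
    MeasurableSet {t | p t ≠ q t} := by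
  have : {t | p t ≠ q t} = ⋃ a : M, p ⁻¹' {a} ∩ (q ⁻¹' {a})ᶜ := by
    ext t
    simp only [Set.mem_setOf_eq, Set.mem_iUnion, Set.mem_inter_iff, Set.mem_preimage,
      Set.mem_singleton_iff, Set.mem_compl_iff]
    constructor
    · intro h; exact ⟨p t, rfl, fun h' => h h'.symm⟩
    · rintro ⟨a, ha, hb⟩ h; exact hb (h ▸ ha)
  rw [this]
  exact MeasurableSet.iUnion fun a => (hp a).inter (hq a).compl

/-- Completeness of the space M^L of random elements: every Cauchy sequence in the
pseudometric d(f,g) = λ{t : f(t) ≠ g(t)} converges to some f ∈ M^L. -/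
theorem ML_complete {M : Type*} [Countable M] [Nonempty M]
    (f : ℕ → ℝ → M)
    (hfib : ∀ n, ∀ a : M, MeasurableSet ((f n) ⁻¹' {a}))
    (hcauchy : ∀ ε : ℝ, 0 < ε → ∃ N, ∀ m ≥ N, ∀ n ≥ N,
      ((volume.restrict (Set.Ico (0:ℝ) 1)) {t | f m t ≠ f n t}).toReal < ε) :
    ∃ g : ℝ → M, (∀ a : M, MeasurableSet (g ⁻¹' {a})) ∧
      Tendsto (fun n => ((volume.restrict (Set.Ico (0:ℝ) 1)) {t | f n t ≠ g t}).toReal)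
        atTop (nhds 0) := by
  classical
  set μ := volume.restrict (Set.Ico (0:ℝ) 1) with hμ
  haveI : IsFiniteMeasure μ := by
    constructor
    rw [hμ, Measure.restrict_apply_univ, Real.volume_Ico]
    simp
  -- Cauchy in ENNReal form with bound 2⁻¹ ^ k
  have hc : ∀ k : ℕ, ∃ N, ∀ m ≥ N, ∀ n ≥ N,
      μ {t | f m t ≠ f n t} < (2⁻¹ : ℝ≥0∞) ^ k := by
    intro k
    obtain ⟨N, hN⟩ := hcauchy ((1/2 : ℝ) ^ k) (by positivity)
    refine ⟨N, fun m hm n hn => ?_⟩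
    have hfin : μ {t | f m t ≠ f n t} ≠ ⊤ := measure_ne_top μ _
    have : μ {t | f m t ≠ f n t} < ENNReal.ofReal ((1/2 : ℝ) ^ k) :=
      (ENNReal.lt_ofReal_iff_toReal_lt hfin).2 (hN m hm n hn)
    convert this using 1
    rw [ENNReal.ofReal_pow (by norm_num : (0:ℝ) ≤ 1/2)]
    congr 1
    rw [one_div, ENNReal.ofReal_inv_of_pos (by norm_num)]
    norm_num
  choose c hcspec using hc
  -- monotone-dominating sequence of indices
  set N : ℕ → ℕ := fun k => (Finset.range (k+1)).sup c with hN
  have hNc : ∀ j k, j ≤ k → c j ≤ N k := fun j k hjk =>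
    Finset.le_sup (Finset.mem_range.2 (Nat.lt_succ_of_le hjk))
  -- difference sets along subsequence
  set E : ℕ → Set ℝ := fun j => {t | f (N j) t ≠ f (N (j+1)) t} with hE
  have hEbound : ∀ j, μ (E j) ≤ (2⁻¹ : ℝ≥0∞) ^ j := fun j =>
    le_of_lt (hcspec j (N j) (hNc j j le_rfl) (N (j+1)) (hNc j (j+1) (Nat.le_succ j)))
  -- eventual-value sets
  set A : M → Set ℝ := fun a => {t | ∃ m, ∀ k ≥ m, f (N k) t = a} with hA
  have hAdisj : ∀ a b : M, ∀ t, t ∈ A a → t ∈ A b → a = b := by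
    rintro a b t ⟨m₁, h₁⟩ ⟨m₂, h₂⟩
    rw [← h₁ (max m₁ m₂) (le_max_left _ _), h₂ (max m₁ m₂) (le_max_right _ _)]
  -- the limit function
  set g : ℝ → M := fun t => if h : ∃ a, t ∈ A a then h.choose else Classical.arbitrary M
    with hg
  have hgA : ∀ a t, t ∈ A a → g t = a := by
    intro a t ht
    have h : ∃ b, t ∈ A b := ⟨a, ht⟩
    rw [hg]
    simp only [dif_pos h]
    exact hAdisj _ _ t h.choose_spec ht
  have hAmeas : ∀ a : M, MeasurableSet (A a) := by
    intro a
    have : A a = ⋃ m, ⋂ k, ⋂ (_ : k ≥ m), (f (N k)) ⁻¹' {a} := by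
      ext t
      simp [hA, Set.mem_iUnion, Set.mem_iInter]
    rw [this]
    exact MeasurableSet.iUnion fun m => MeasurableSet.iInter fun k =>
      MeasurableSet.iInter fun _ => hfib _ a
  have hgfib : ∀ a : M, MeasurableSet (g ⁻¹' {a}) := by
    intro a
    by_cases hd : Classical.arbitrary M = a
    · have : g ⁻¹' {a} = A a ∪ (⋃ b, A b)ᶜ := by
        ext t
        simp only [Set.mem_preimage, Set.mem_singleton_iff, Set.mem_union, Set.mem_compl_iff,
          Set.mem_iUnion, not_exists]
        constructor
        · intro hgt
          by_cases h : ∃ b, t ∈ A b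
          · left
            obtain ⟨b, hb⟩ := h
            have := hgA b t hb
            rw [this] at hgt
            exact hgt ▸ hb
          · right; exact fun b hb => h ⟨b, hb⟩
        · rintro (h | h)
          · exact hgA a t h
          · rw [hg]; simp only [dif_neg (fun hx : ∃ b, t ∈ A b => h hx.choose hx.choose_spec)]
            exact hd
      rw [this]
      exact (hAmeas a).union (MeasurableSet.iUnion hAmeas).compl
    · have : g ⁻¹' {a} = A a := by
        ext t
        simp only [Set.mem_preimage, Set.mem_singleton_iff]
        constructor
        · intro hgt
          by_cases h : ∃ b, t ∈ A b
          · obtain ⟨b, hb⟩ := h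
            have := hgA b t hb
            rw [this] at hgt
            exact hgt ▸ hb
          · exfalso; apply hd; rw [hg] at hgt; simpa [dif_neg h] using hgt
        · exact hgA a t
      rw [this]; exact hAmeas a
  -- key subset estimate
  have hsub : ∀ k, {t | f (N k) t ≠ g t} ⊆ ⋃ j, E (k + j) := by
    intro k t ht
    by_contra hU
    simp only [Set.mem_iUnion, not_exists] at hU
    have hconst : ∀ j, f (N (k + j)) t = f (N k) t := by
      intro j
      induction j with
      | zero => rfl
      | succ j ih =>
        have h2 : t ∉ E (k + j) := hU j
        rw [hE] at h2
        simp only [Set.mem_setOf_eq, not_not] at h2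
        have h3 : k + (j + 1) = (k + j) + 1 := by ring
        rw [h3, ← h2, ih]
    have : t ∈ A (f (N k) t) := by
      refine ⟨k, fun l hl => ?_⟩
      have := hconst (l - k)
      rwa [Nat.add_sub_cancel' hl] at this
    exact ht (hgA _ t this).symm
  -- tail measure bound
  have htail : ∀ k, μ {t | f (N k) t ≠ g t} ≤ 2 * (2⁻¹ : ℝ≥0∞) ^ k := by
    intro k
    calc μ {t | f (N k) t ≠ g t} ≤ μ (⋃ j, E (k + j)) := measure_mono (hsub k)
      _ ≤ ∑' j, μ (E (k + j)) := measure_iUnion_le _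
      _ ≤ ∑' j : ℕ, (2⁻¹ : ℝ≥0∞) ^ (k + j) := ENNReal.tsum_le_tsum fun j => hEbound (k + j)
      _ = (2⁻¹ : ℝ≥0∞) ^ k * ∑' j : ℕ, (2⁻¹ : ℝ≥0∞) ^ j := by
          rw [← ENNReal.tsum_mul_left]
          congr 1; funext j; rw [pow_add]
      _ = (2⁻¹ : ℝ≥0∞) ^ k * 2 := by
          rw [ENNReal.tsum_geometric, ENNReal.one_sub_inv_two, inv_inv]
      _ = 2 * (2⁻¹ : ℝ≥0∞) ^ k := mul_comm _ _
  refine ⟨g, hgfib, ?_⟩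
  rw [Metric.tendsto_atTop]
  intro ε hε
  -- choose k with 2 * 2⁻¹^k small
  have hpow : Tendsto (fun k : ℕ => (2⁻¹ : ℝ≥0∞) ^ k) atTop (nhds 0) :=
    ENNReal.tendsto_pow_atTop_nhds_zero_of_lt_one (by simp)
  have hε4 : (0 : ℝ≥0∞) < ENNReal.ofReal (ε / 4) := by
    rw [ENNReal.ofReal_pos]; linarith
  have hev : ∀ᶠ k in atTop, (2⁻¹ : ℝ≥0∞) ^ k < ENNReal.ofReal (ε / 4) :=
    hpow.eventually_lt_const hε4
  obtain ⟨k, hk⟩ := hev.exists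
  refine ⟨c k, fun n hn => ?_⟩
  have h1 : μ {t | f n t ≠ f (N k) t} < (2⁻¹ : ℝ≥0∞) ^ k :=
    hcspec k n hn (N k) (hNc k k le_rfl)
  have h2 : μ {t | f n t ≠ g t} ≤ μ {t | f n t ≠ f (N k) t} + μ {t | f (N k) t ≠ g t} := by
    refine le_trans (measure_mono ?_) (measure_union_le _ _)
    intro t ht
    by_cases h : f n t = f (N k) t
    · right; simp only [Set.mem_setOf_eq]; rw [← h]; exact ht
    · left; exact h
  have h3 : μ {t | f n t ≠ g t} < ENNReal.ofReal ε := by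
    calc μ {t | f n t ≠ g t} ≤ μ {t | f n t ≠ f (N k) t} + μ {t | f (N k) t ≠ g t} := h2
      _ < ENNReal.ofReal (ε / 4) + 2 * ENNReal.ofReal (ε / 4) := by
          have hb : μ {t | f (N k) t ≠ g t} ≤ 2 * ENNReal.ofReal (ε / 4) :=
            le_trans (htail k) (mul_le_mul_right hk.le 2)
          exact ENNReal.add_lt_add_of_lt_of_le (measure_ne_top μ _) (lt_of_lt_of_le h1 hk.le) hb
      _ ≤ ENNReal.ofReal ε := by
          rw [← ENNReal.ofReal_ofNat, ← ENNReal.ofReal_mul (by norm_num)]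
          rw [← ENNReal.ofReal_add (by linarith) (by positivity)]
          apply ENNReal.ofReal_le_ofReal
          ring_nf
          linarith
  have hfin : μ {t | f n t ≠ g t} ≠ ⊤ := measure_ne_top μ _
  have := (ENNReal.lt_ofReal_iff_toReal_lt hfin).1 h3
  rw [Real.dist_eq, sub_zero, abs_of_nonneg ENNReal.toReal_nonneg]
  exact this
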